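/- Let Λ(T) be the operation on isomorphism classes of finite-dimensional complex representations of ℤ/nℤ defined by Λ(V) = Σ_j (-1)^j [Λ^j V]. If V has no nonzero invariant vectors (no eigenvalue 1), then the virtual character of Λ(V^∨) evaluated at a generator g is Π_i (1 - ζ̄_i) where ζ_i are the eigenvalues of g on V, and this value is a nonzero element of ℂ; consequently the class λ_{-1}(V^∨) is invertible in the representation ring R(ℤ/nℤ) localized at the prime ideal ρ. -/

import Mathlib

open Polynomial

/-- Let `V` be a finite-dimensional complex representation of `ℤ/nℤ` with
no nonzero invariant vectors: the generator `g` acts with eigenvalues `ζₙ^{a i}`,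
`ζₙ = e^{2πi/n}`, `0 < a i < n`.  In the representation ring `R(ℤ/nℤ) ≅ ℤ[T]/(1-Tⁿ)`, the
class `λ₋₁(V^∨) = ∑_j (-1)^j [Λ^j V^∨]` is `x = ∏_i (1 - T^{n - a i})`.  Under the character
map `χ` at `ζₙ` (i.e. `T ↦ ζₙ`), `x` goes to `∏_i (1 - conj(ζₙ^{a i}))`, a nonzero complex
number; consequently `x ∉ ρ = ker(ℤ[T]/(1-Tⁿ) → ℤ[T]/(Φ_n))`, and `x` is invertible in the
localization of `R(ℤ/nℤ)` at the prime ideal `ρ`. -/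
theorem stmt17 (n : ℕ) (hn : 0 < n) (d : ℕ) (a : Fin d → ℕ)
    (ha : ∀ i, 0 < a i ∧ a i < n)
    (χ : (Polynomial ℤ ⧸ Ideal.span {(1 - X ^ n : Polynomial ℤ)}) →+* ℂ)
    (hχ : χ (Ideal.Quotient.mk (Ideal.span {(1 - X ^ n : Polynomial ℤ)}) X)
      = Complex.exp (2 * Real.pi * Complex.I / n))
    (hle : Ideal.span {(1 - X ^ n : Polynomial ℤ)} ≤
      Ideal.span {(Polynomial.cyclotomic n ℤ : Polynomial ℤ)})
    (ρ : Ideal (Polynomial ℤ ⧸ Ideal.span {(1 - X ^ n : Polynomial ℤ)}))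
    (hρ : ρ = RingHom.ker (Ideal.Quotient.factor
      (S := Ideal.span {(1 - X ^ n : Polynomial ℤ)})
      (T := Ideal.span {(Polynomial.cyclotomic n ℤ : Polynomial ℤ)}) hle))
    (M : Submonoid (Polynomial ℤ ⧸ Ideal.span {(1 - X ^ n : Polynomial ℤ)}))
    (hM : (M : Set (Polynomial ℤ ⧸ Ideal.span {(1 - X ^ n : Polynomial ℤ)})) = {y | y ∉ ρ})
    (S : Type*) [CommRing S]
    [Algebra (Polynomial ℤ ⧸ Ideal.span {(1 - X ^ n : Polynomial ℤ)}) S]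
    [IsLocalization M S]
    (x : Polynomial ℤ ⧸ Ideal.span {(1 - X ^ n : Polynomial ℤ)})
    (hx : x = ∏ i, (1 - (Ideal.Quotient.mk (Ideal.span {(1 - X ^ n : Polynomial ℤ)}) X)
      ^ (n - a i))) :
    χ x = ∏ i, (1 - (starRingEnd ℂ) (Complex.exp (2 * Real.pi * Complex.I / n) ^ (a i))) ∧
    (∏ i, (1 - (starRingEnd ℂ) (Complex.exp (2 * Real.pi * Complex.I / n) ^ (a i)))) ≠ 0 ∧
    x ∉ ρ ∧
    IsUnit (algebraMap (Polynomial ℤ ⧸ Ideal.span {(1 - X ^ n : Polynomial ℤ)}) S x) := by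
  set ζ : ℂ := Complex.exp (2 * Real.pi * Complex.I / n) with hζdef
  have hprim : IsPrimitiveRoot ζ n := Complex.isPrimitiveRoot_exp n hn.ne'
  have habs : ‖ζ‖ = 1 := by
    rw [hζdef, Complex.norm_exp]
    have : (2 * Real.pi * Complex.I / n).re = 0 := by
      simp [Complex.div_re, Complex.mul_re]
    rw [this, Real.exp_zero]
  -- conj(ζ^a i) = ζ^(n - a i)
  have hconj : ∀ i, (starRingEnd ℂ) (ζ ^ (a i)) = ζ ^ (n - a i) := by
    intro i
    have h1 : ζ ^ (n - a i) * ζ ^ (a i) = 1 := by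
      rw [← pow_add, Nat.sub_add_cancel (ha i).2.le, hprim.pow_eq_one]
    have h2 : ‖ζ ^ a i‖ = 1 := by rw [norm_pow, habs, one_pow]
    rw [← Complex.inv_eq_conj h2]
    exact (eq_inv_of_mul_eq_one_left h1).symm
  -- the polynomial
  set P : Polynomial ℤ := ∏ i, (1 - X ^ (n - a i)) with hP
  have hxP : x = Ideal.Quotient.mk _ P := by
    rw [hx, hP, map_prod]; simp
  have hχx : χ x = ∏ i, (1 - ζ ^ (n - a i)) := by
    rw [hx, map_prod]; simp [hχ]
  have hval : χ x = ∏ i, (1 - (starRingEnd ℂ) (ζ ^ (a i))) := by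
    rw [hχx]; exact Finset.prod_congr rfl fun i _ => by rw [hconj i]
  have hne : (∏ i, (1 - (starRingEnd ℂ) (ζ ^ (a i)))) ≠ 0 := by
    apply Finset.prod_ne_zero_iff.mpr
    intro i _
    intro h
    have h1 : (starRingEnd ℂ) (ζ ^ (a i)) = 1 := by linear_combination -h
    have h2 : ζ ^ (a i) = 1 := by
      have := congrArg (starRingEnd ℂ) h1
      simpa using this
    exact hprim.pow_ne_one_of_pos_of_lt (ha i).1.ne' (ha i).2 h2
  have hnotρ : x ∉ ρ := by
    rw [hρ, RingHom.mem_ker]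
    intro h
    rw [hxP, Ideal.Quotient.factor_mk, Ideal.Quotient.eq_zero_iff_mem,
      Ideal.mem_span_singleton] at h
    obtain ⟨q, hq⟩ := h
    have hz : (Polynomial.aeval ζ) P = 0 := by
      rw [hq, map_mul]
      have : (Polynomial.aeval ζ) (Polynomial.cyclotomic n ℤ) = 0 := by
        have : NeZero (n : ℂ) := ⟨Nat.cast_ne_zero.mpr hn.ne'⟩
        rw [Polynomial.aeval_def, Polynomial.eval₂_eq_eval_map, Polynomial.map_cyclotomic]
        exact (Polynomial.isRoot_cyclotomic_iff (R := ℂ)).mpr hprim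
      rw [this, zero_mul]
    have : χ x = 0 := by
      rw [hχx, ← hz, hP]
      simp
    rw [hval] at this
    exact hne this
  refine ⟨hval, hne, hnotρ, ?_⟩
  have hxM : x ∈ M := by
    rw [← SetLike.mem_coe, hM]; exact hnotρ
  exact IsLocalization.map_units S ⟨x, hxM⟩
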